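/- Let α ∈ (-1,1), ρ as above, and define γ by γ' = -α sin(2ρ), γ(0) = 0. Then γ is even and V-periodic, where V > 0 satisfies ρ(V) = π. -/

import Mathlib

open Real Set NNReal

/-- Global uniqueness for autonomous ODEs with Lipschitz RHS. -/
lemma ode_unique_global {F : ℝ → ℝ} {K : ℝ≥0} (hF : LipschitzWith K F)
    {f g : ℝ → ℝ} (hf : ∀ t, HasDerivAt f (F (f t)) t)
    (hg : ∀ t, HasDerivAt g (F (g t)) t) (h0 : f 0 = g 0) : f = g := by
  funext t
  have h0mem : (0:ℝ) ∈ Ioo (-(|t|+1)) (|t|+1) := by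
    constructor <;> nlinarith [abs_nonneg t]
  have htmem : t ∈ Ioo (-(|t|+1)) (|t|+1) := by
    constructor
    · nlinarith [neg_abs_le t]
    · nlinarith [le_abs_self t]
  exact ODE_solution_unique_of_mem_Ioo (v := fun _ x => F x) (s := fun _ => univ)
    (fun _ _ => hF.lipschitzOnWith) h0mem
    (fun s _ => ⟨hf s, trivial⟩) (fun s _ => ⟨hg s, trivial⟩) h0 htmem

theorem catenoid_gamma_even_periodic
    (α : ℝ) (hα : α ∈ Set.Ioo (-1 : ℝ) 1) (ρ γ : ℝ → ℝ)
    (hρ : ∀ v : ℝ, HasDerivAt ρ (Real.sqrt (1 - α ^ 2 * Real.sin (2 * ρ v) ^ 2)) v)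
    (hρ0 : ρ 0 = 0) (V : ℝ) (hV : 0 < V) (hρV : ρ V = Real.pi)
    (hγ : ∀ v : ℝ, HasDerivAt γ (-α * Real.sin (2 * ρ v)) v)
    (hγ0 : γ 0 = 0) :
    (∀ v : ℝ, γ (-v) = γ v) ∧ (∀ v : ℝ, γ (v + V) = γ v) := by
  obtain ⟨hα1, hα2⟩ := hα
  have hα2lt : α ^ 2 < 1 := by nlinarith
  have hc : (0:ℝ) < Real.sqrt (1 - α ^ 2) := Real.sqrt_pos.2 (by linarith)
  set F : ℝ → ℝ := fun x => Real.sqrt (1 - α ^ 2 * Real.sin (2 * x) ^ 2) with hFdef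
  have hinner : ∀ x : ℝ, 1 - α ^ 2 ≤ 1 - α ^ 2 * Real.sin (2 * x) ^ 2 := by
    intro x
    nlinarith [Real.sin_sq_le_one (2 * x), sq_nonneg α]
  have hinnerpos : ∀ x : ℝ, 0 < 1 - α ^ 2 * Real.sin (2 * x) ^ 2 := fun x =>
    lt_of_lt_of_le (by linarith) (hinner x)
  -- derivative of F
  have hF' : ∀ x : ℝ, HasDerivAt F
      (-(α ^ 2 * (2 * Real.sin (2*x) * (Real.cos (2*x) * 2))) /
        (2 * Real.sqrt (1 - α ^ 2 * Real.sin (2 * x) ^ 2))) x := by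
    intro x
    have h1 : HasDerivAt (fun y : ℝ => 2 * y) 2 x := by
      simpa using (hasDerivAt_id x).const_mul 2
    have h2 : HasDerivAt (fun y : ℝ => Real.sin (2 * y)) (Real.cos (2*x) * 2) x := h1.sin
    have h3 : HasDerivAt (fun y : ℝ => Real.sin (2 * y) ^ 2)
        (2 * Real.sin (2*x) * (Real.cos (2*x) * 2)) x := by
      simpa using h2.fun_pow 2
    have h4 : HasDerivAt (fun y : ℝ => 1 - α ^ 2 * Real.sin (2 * y) ^ 2)
        (-(α ^ 2 * (2 * Real.sin (2*x) * (Real.cos (2*x) * 2)))) x := by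
      simpa using (h3.const_mul (α ^ 2)).const_sub 1
    exact h4.sqrt (ne_of_gt (hinnerpos x))
  -- Lipschitz bound
  set C : ℝ := 2 / Real.sqrt (1 - α ^ 2) with hCdef
  have hCnonneg : 0 ≤ C := by positivity
  have hbound : ∀ x : ℝ, ‖deriv F x‖ ≤ C := by
    intro x
    rw [(hF' x).deriv, Real.norm_eq_abs, abs_div]
    have hs : Real.sqrt (1 - α ^ 2) ≤ Real.sqrt (1 - α ^ 2 * Real.sin (2 * x) ^ 2) :=
      Real.sqrt_le_sqrt (hinner x)
    have hd : (0:ℝ) < 2 * Real.sqrt (1 - α ^ 2 * Real.sin (2 * x) ^ 2) := by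
      have := Real.sqrt_pos.2 (hinnerpos x); linarith
    rw [abs_of_pos hd]
    have hnum : |(-(α ^ 2 * (2 * Real.sin (2*x) * (Real.cos (2*x) * 2))))| ≤ 4 := by
      rw [abs_le]
      constructor <;>
        nlinarith [Real.neg_one_le_sin (2*x), Real.sin_le_one (2*x),
          Real.neg_one_le_cos (2*x), Real.cos_le_one (2*x), sq_nonneg α, hα2lt,
          sq_nonneg (Real.sin (2*x) - Real.cos (2*x)), sq_nonneg (Real.sin (2*x) + Real.cos (2*x))]
    calc |(-(α ^ 2 * (2 * Real.sin (2*x) * (Real.cos (2*x) * 2))))| /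
          (2 * Real.sqrt (1 - α ^ 2 * Real.sin (2 * x) ^ 2))
        ≤ 4 / (2 * Real.sqrt (1 - α ^ 2)) :=
          div_le_div₀ (by norm_num) hnum (by linarith) (by linarith)
      _ = C := by rw [hCdef, div_eq_div_iff (by linarith) (by linarith)]; ring
  have hFdiff : Differentiable ℝ F := fun x => (hF' x).differentiableAt
  have hFlip : LipschitzWith C.toNNReal F := by
    apply lipschitzWith_of_nnnorm_deriv_le hFdiff
    intro x
    rw [← NNReal.coe_le_coe, coe_nnnorm, Real.coe_toNNReal _ hCnonneg]
    exact hbound x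
  have hFρ : ∀ v, HasDerivAt ρ (F (ρ v)) v := hρ
  -- oddness of ρ
  have hoddf : (fun v : ℝ => -ρ (-v)) = ρ := by
    refine ode_unique_global hFlip (fun t => ?_) hFρ (by simp [hρ0])
    have h1 : HasDerivAt (fun v : ℝ => ρ (-v)) (F (ρ (-t)) * (-1)) t :=
      (hFρ (-t)).comp t (hasDerivAt_neg t)
    have h2 : HasDerivAt (fun v : ℝ => -ρ (-v)) (F (ρ (-t))) t := by
      simpa using h1.fun_neg
    convert h2 using 1
    simp only [hFdef]
    rw [show (2 : ℝ) * -ρ (-t) = -(2 * ρ (-t)) by ring, Real.sin_neg, neg_sq]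
  have hodd : ∀ v : ℝ, ρ (-v) = -ρ v := by
    intro v
    have := congrFun hoddf v
    linarith
  -- reflection identity
  have hreflf : (fun v : ℝ => Real.pi - ρ (V - v)) = ρ := by
    refine ode_unique_global hFlip (fun t => ?_) hFρ (by simp [hρV, hρ0])
    have h0 : HasDerivAt (fun v : ℝ => V - v) (-1) t := by
      simpa using (hasDerivAt_id t).const_sub V
    have h1 : HasDerivAt (fun v : ℝ => ρ (V - v)) (F (ρ (V - t)) * (-1)) t :=
      (hFρ (V - t)).comp t h0
    have h2 : HasDerivAt (fun v : ℝ => Real.pi - ρ (V - v)) (F (ρ (V - t))) t := by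
      simpa using h1.const_sub Real.pi
    convert h2 using 1
    simp only [hFdef]
    rw [show (2 : ℝ) * (Real.pi - ρ (V - t)) = -(2 * ρ (V - t)) + 2 * Real.pi by ring,
      Real.sin_add_two_pi, Real.sin_neg, neg_sq]
  have hrefl : ∀ v : ℝ, ρ (V - v) = Real.pi - ρ v := by
    intro v
    have := congrFun hreflf v
    linarith
  -- shift identity
  have hshift : ∀ v : ℝ, ρ (v + V) = ρ v + Real.pi := by
    intro v
    have h1 := hrefl (-v)
    rw [hodd v] at h1
    have : V - -v = v + V := by ring
    rw [this] at h1
    linarith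
  -- constancy helper
  have key : ∀ (h : ℝ → ℝ), (∀ v : ℝ, HasDerivAt h 0 v) → ∀ x y : ℝ, h x = h y := by
    intro h hh x y
    exact is_const_of_deriv_eq_zero (fun v => (hh v).differentiableAt)
      (fun v => (hh v).deriv) x y
  -- evenness of γ
  have heven : ∀ v : ℝ, γ (-v) = γ v := by
    have hd : ∀ v : ℝ, HasDerivAt (fun v : ℝ => γ (-v) - γ v) 0 v := by
      intro v
      have h1 : HasDerivAt (fun v : ℝ => γ (-v)) ((-α * Real.sin (2 * ρ (-v))) * (-1)) v :=
        (hγ (-v)).comp v (hasDerivAt_neg v)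
      have h2 : HasDerivAt (fun v : ℝ => γ (-v) - γ v) _ v := h1.fun_sub (hγ v)
      convert h2 using 1
      rw [hodd v, show (2 : ℝ) * -ρ v = -(2 * ρ v) by ring, Real.sin_neg]
      ring
    intro v
    have := key _ hd v 0
    simp only [neg_zero, sub_self] at this
    linarith [this]
  refine ⟨heven, ?_⟩
  -- γ V = 0
  have hγV : γ V = 0 := by
    have hd : ∀ v : ℝ, HasDerivAt (fun v : ℝ => γ (V - v) - γ v) 0 v := by
      intro v
      have h0 : HasDerivAt (fun v : ℝ => V - v) (-1) v := by
        simpa using (hasDerivAt_id v).const_sub V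
      have h1 : HasDerivAt (fun v : ℝ => γ (V - v)) ((-α * Real.sin (2 * ρ (V - v))) * (-1)) v :=
        (hγ (V - v)).comp v h0
      have h2 : HasDerivAt (fun v : ℝ => γ (V - v) - γ v) _ v := h1.fun_sub (hγ v)
      convert h2 using 1
      rw [hrefl v, show (2 : ℝ) * (Real.pi - ρ v) = -(2 * ρ v) + 2 * Real.pi by ring,
        Real.sin_add_two_pi, Real.sin_neg]
      ring
    have := key _ hd 0 V
    simp only [sub_zero, sub_self] at this
    rw [hγ0] at this
    linarith
  -- periodicity
  intro v
  have hd : ∀ v : ℝ, HasDerivAt (fun v : ℝ => γ (v + V) - γ v) 0 v := by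
    intro v
    have h0 : HasDerivAt (fun v : ℝ => v + V) 1 v := by
      simpa using (hasDerivAt_id v).add_const V
    have h1 : HasDerivAt (fun v : ℝ => γ (v + V)) ((-α * Real.sin (2 * ρ (v + V))) * 1) v :=
      (hγ (v + V)).comp v h0
    have h2 : HasDerivAt (fun v : ℝ => γ (v + V) - γ v) _ v := h1.fun_sub (hγ v)
    convert h2 using 1
    rw [hshift v, show (2 : ℝ) * (ρ v + Real.pi) = 2 * ρ v + 2 * Real.pi by ring,
      Real.sin_add_two_pi]
    ring
  have := key _ hd v 0
  simp only [zero_add, hγ0, sub_zero] at this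
  rw [hγV] at this
  linarith
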